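/- With W = V ⊥ P, φ: C(W) → M₂(C(V)) the Vahlen isomorphism, and Γ(W) the Clifford group of W, a matrix A = [[a,b],[c,d]] ∈ M₂(C(V)) belongs to the Vahlen group 𝒱(V) = φ(Γ(W)) if and only if: (1) ad* − bc* = d*a − b*c = λ·1 for some λ ∈ F^×; (2) ba* − ab* = cd* − dc* = 0; (3) a*c − c*a = d*b − b*d = 0; (4) aā, bb̄, cc̄, dd̄ are scalars (in F·1); (5) bd̄ and ac̄ lie in V (the image of ι); (6) avb̄ + bv̄ā and cvd̄ + dv̄c̄ are scalars for all v ∈ V; (7) avd̄ + bv̄c̄ lies in V for all v ∈ V. Moreover A ∈ φ(Γ⁰(W)) if and only if in addition a,d ∈ C⁰(V) and b,c ∈ C¹(V). -/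

import Mathlib

open CliffordAlgebra

/-- The conditions (1)–(7) of Theorem `vahlenexpand` on a matrix
`A = [[a,b],[c,d]] ∈ M₂(C(V))`.  Here `x* = reverse x` and `x̄ = involute (reverse x)`,
and `a = A 0 0`, `b = A 0 1`, `c = A 1 0`, `d = A 1 1`. -/
def VahlenConds {F : Type*} [Field F] {V : Type*} [AddCommGroup V] [Module F V]
    (Q : QuadraticForm F V) (A : Matrix (Fin 2) (Fin 2) (CliffordAlgebra Q)) : Prop :=
  (∃ l : F, l ≠ 0 ∧
      A 0 0 * reverse (A 1 1) - A 0 1 * reverse (A 1 0)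
        = algebraMap F (CliffordAlgebra Q) l ∧
      reverse (A 1 1) * A 0 0 - reverse (A 0 1) * A 1 0
        = algebraMap F (CliffordAlgebra Q) l) ∧
  (A 0 1 * reverse (A 0 0) - A 0 0 * reverse (A 0 1) = 0 ∧
   A 1 0 * reverse (A 1 1) - A 1 1 * reverse (A 1 0) = 0) ∧
  (reverse (A 0 0) * A 1 0 - reverse (A 1 0) * A 0 0 = 0 ∧
   reverse (A 1 1) * A 0 1 - reverse (A 0 1) * A 1 1 = 0) ∧
  ((∃ s : F, A 0 0 * involute (reverse (A 0 0)) = algebraMap F (CliffordAlgebra Q) s) ∧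
   (∃ s : F, A 0 1 * involute (reverse (A 0 1)) = algebraMap F (CliffordAlgebra Q) s) ∧
   (∃ s : F, A 1 0 * involute (reverse (A 1 0)) = algebraMap F (CliffordAlgebra Q) s) ∧
   (∃ s : F, A 1 1 * involute (reverse (A 1 1)) = algebraMap F (CliffordAlgebra Q) s)) ∧
  ((∃ v : V, A 0 1 * involute (reverse (A 1 1)) = ι Q v) ∧
   (∃ v : V, A 0 0 * involute (reverse (A 1 0)) = ι Q v)) ∧
  (∀ v : V,
    (∃ s : F, A 0 0 * ι Q v * involute (reverse (A 0 1)) +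
        A 0 1 * involute (reverse (ι Q v)) * involute (reverse (A 0 0))
        = algebraMap F (CliffordAlgebra Q) s) ∧
    (∃ s : F, A 1 0 * ι Q v * involute (reverse (A 1 1)) +
        A 1 1 * involute (reverse (ι Q v)) * involute (reverse (A 1 0))
        = algebraMap F (CliffordAlgebra Q) s)) ∧
  (∀ v : V, ∃ w : V,
    A 0 0 * ι Q v * involute (reverse (A 1 1)) +
      A 0 1 * involute (reverse (ι Q v)) * involute (reverse (A 1 0)) = ι Q w)


namespace VahlenAux

section General

variable {E : Type*} [Field E] {M : Type*} [AddCommGroup M] [Module E M]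
variable (Q : QuadraticForm E M)

theorem key_contract (v : M) (x : CliffordAlgebra Q) :
    ι Q v * x - involute x * ι Q v = contractLeft (Q.polarBilin v) x := by
  induction x using CliffordAlgebra.left_induction with
  | algebraMap r =>
      rw [contractLeft_algebraMap, AlgHom.commutes, Algebra.commutes]
      exact sub_self _
  | add x y hx hy =>
      rw [map_add, map_add, mul_add, add_mul, ← hx, ← hy]; abel
  | ι_mul x m hx =>
      rw [contractLeft_ι_mul, map_mul, involute_ι, ← hx]
      have h := ι_mul_ι_add_swap (Q := Q) v m
      rw [QuadraticMap.polarBilin_apply_apply, Algebra.smul_def, ← h]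
      noncomm_ring


theorem twisted_central (h2 : (2:E) ≠ 0) [FiniteDimensional E M]
    (hnd : ∀ x : M, (∀ y, QuadraticMap.polar Q x y = 0) → x = 0)
    (z : CliffordAlgebra Q) (hz : ∀ v, z * ι Q v = ι Q v * involute z) :
    ∃ r : E, z = algebraMap E _ r := by
  haveI : Invertible (2:E) := invertibleOfNonzero h2
  classical
  -- contractions of z vanish
  have hcz : ∀ v : M, contractLeft (R := E) (Q.polarBilin v) z = 0 := by
    intro v
    rw [← key_contract]
    have h1 := congrArg involute (hz v)
    rw [map_mul, map_mul, involute_ι, involute_involute, mul_neg, neg_mul] at h1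
    have h1' : involute z * ι Q v = ι Q v * z := by
      have := neg_injective h1; linear_combination (norm := noncomm_ring) this
    rw [h1']; exact sub_self _
  obtain ⟨bb, hbb⟩ := LinearMap.BilinForm.exists_orthogonal_basis
    (B := Q.polarBilin) (LinearMap.isSymm_def.2 fun x y => by
      simp [QuadraticMap.polarBilin_apply_apply, QuadraticMap.polar_comm])
  set p : Fin (Module.finrank E M) → E :=
    fun i => QuadraticMap.polar Q (bb i) (bb i) with hpdef
  have horth : ∀ {i j}, i ≠ j → QuadraticMap.polar Q (bb i) (bb j) = 0 := by
    intro i j h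
    have := hbb h
    rwa [Function.onFun, QuadraticMap.polarBilin_apply_apply] at this
  have hp : ∀ i, p i ≠ 0 := by
    intro i hpi
    refine bb.ne_zero i (hnd (bb i) fun y => ?_)
    have : Q.polarBilin (bb i) y = 0 := by
      rw [← Module.Basis.sum_repr bb y, map_sum]
      refine Finset.sum_eq_zero fun j _ => ?_
      rw [map_smul, smul_eq_mul, QuadraticMap.polarBilin_apply_apply]
      rcases eq_or_ne i j with rfl | hij
      · rw [show QuadraticMap.polar Q (bb i) (bb i) = p i from rfl, hpi, mul_zero]
      · rw [horth hij, mul_zero]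
    simpa [QuadraticMap.polarBilin_apply_apply] using this
  have hq : ∀ i, Q (bb i) ≠ 0 := by
    intro i h
    apply hp i
    rw [hpdef]
    simp only [QuadraticMap.polar_self, h, smul_zero]
  have hp2 : ∀ i, p i = 2 * Q (bb i) := by
    intro i; rw [hpdef]; simp [QuadraticMap.polar_self, two_smul, two_mul]
  set δ : Fin (Module.finrank E M) → Module.End E (CliffordAlgebra Q) :=
    fun i => contractLeft (R := E) (Q.polarBilin (bb i)) with hδdef
  set μ : Fin (Module.finrank E M) → Module.End E (CliffordAlgebra Q) :=
    fun i => LinearMap.mulLeft E (ι Q (bb i)) with hμdef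
  set P : Fin (Module.finrank E M) → Module.End E (CliffordAlgebra Q) :=
    fun i => (p i)⁻¹ • (δ i * μ i) with hPdef
  have hδμ : ∀ i j (x : CliffordAlgebra Q),
      δ i (μ j x) = QuadraticMap.polar Q (bb i) (bb j) • x - μ j (δ i x) := by
    intro i j x
    simpa [hδdef, hμdef, QuadraticMap.polarBilin_apply_apply] using
      contractLeft_ι_mul (Q := Q) (d := Q.polarBilin (bb i)) (bb j) x
  have hδδ : ∀ i (x : CliffordAlgebra Q), δ i (δ i x) = 0 := by
    intro i x; exact contractLeft_contractLeft _ _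
  have hPapply : ∀ i (x : CliffordAlgebra Q), P i x = (p i)⁻¹ • δ i (μ i x) := by
    intro i x; simp [hPdef, Module.End.mul_apply]
  have hPfix : ∀ i (x : CliffordAlgebra Q), δ i x = 0 → P i x = x := by
    intro i x hx
    rw [hPapply, hδμ, hx, map_zero, sub_zero, smul_smul,
      inv_mul_cancel₀ (hp i), one_smul]
  have hPz : ∀ i, P i z = z := fun i => hPfix i z (hcz (bb i))
  have hPδ : ∀ i (x : CliffordAlgebra Q), P i (δ i x) = δ i x := fun i x =>
    hPfix i _ (hδδ i x)
  have hμμ : ∀ i (x : CliffordAlgebra Q), μ i (μ i x) = Q (bb i) • x := by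
    intro i x
    simp only [hμdef, LinearMap.mulLeft_apply]
    rw [← mul_assoc, ι_sq_scalar, ← Algebra.smul_def]
  have hPμ : ∀ i (x : CliffordAlgebra Q), P i (μ i x) = (2 : E)⁻¹ • δ i x := by
    intro i x
    rw [hPapply, hμμ, map_smul, smul_smul, hp2, mul_inv, mul_assoc,
      inv_mul_cancel₀ (hq i), mul_one]
  -- anticommutation relations
  have hμι : ∀ {i j}, i ≠ j → ι Q (bb i) * ι Q (bb j) = -(ι Q (bb j) * ι Q (bb i)) := by
    intro i j h
    have h0 := ι_mul_ι_add_swap (Q := Q) (bb i) (bb j)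
    rw [show QuadraticMap.polar Q (bb i) (bb j) = 0 from horth h, map_zero] at h0
    exact eq_neg_of_add_eq_zero_left h0
  have hμμ' : ∀ {i j}, i ≠ j → ∀ x : CliffordAlgebra Q, μ i (μ j x) = -μ j (μ i x) := by
    intro i j h x
    simp only [hμdef, LinearMap.mulLeft_apply]
    rw [← mul_assoc, hμι h, ← mul_assoc]
    noncomm_ring
  have hδμ' : ∀ {i j}, i ≠ j → ∀ x : CliffordAlgebra Q, δ i (μ j x) = -μ j (δ i x) := by
    intro i j h x
    rw [hδμ, horth h, zero_smul, zero_sub]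
  have hδδ' : ∀ (i j) (x : CliffordAlgebra Q), δ i (δ j x) = -δ j (δ i x) := by
    intro i j x
    exact contractLeft_comm _ _ _
  have hcomm : ∀ i j, Commute (P i) (P j) := by
    intro i j
    rcases eq_or_ne i j with rfl | h
    · exact Commute.refl _
    · refine LinearMap.ext fun x => ?_
      have core : δ i (μ i (δ j (μ j x))) = δ j (μ j (δ i (μ i x))) := by
        have e1 : μ i (δ j (μ j x)) = -δ j (μ i (μ j x)) := by
          rw [hδμ' (Ne.symm h)]; rw [neg_neg]
        have e2 : μ j (δ i (μ i x)) = -δ i (μ j (μ i x)) := by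
          rw [hδμ' h]; rw [neg_neg]
        rw [e1, e2, map_neg, map_neg, hμμ' (Ne.symm h), map_neg, map_neg, neg_neg,
          hδδ' i j, neg_neg]
      have l1 : P i (P j x) = ((p j)⁻¹ * (p i)⁻¹) • δ i (μ i (δ j (μ j x))) := by
        rw [hPapply j x, map_smul, hPapply i, smul_smul]
      have l2 : P j (P i x) = ((p i)⁻¹ * (p j)⁻¹) • δ j (μ j (δ i (μ i x))) := by
        rw [hPapply i x, map_smul, hPapply j, smul_smul]
      show P i (P j x) = P j (P i x)
      rw [l1, l2, core, mul_comm]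
  -- the product of all the projections
  set L₀ := List.finRange (Module.finrank E M) with hL₀
  set Pall : Module.End E (CliffordAlgebra Q) := (L₀.map P).prod with hPall
  have hfix_list : ∀ (L : List (Fin (Module.finrank E M))) (x : CliffordAlgebra Q),
      (∀ i, P i x = x) → ((L.map P).prod) x = x := by
    intro L
    induction L with
    | nil => intro x _; simp
    | cons j L ih =>
        intro x hx
        rw [List.map_cons, List.prod_cons, Module.End.mul_apply, ih x hx, hx j]
  have hPallz : Pall z = z := hfix_list _ z hPz
  have hpair_aux : ∀ L : List (Fin (Module.finrank E M)),
      List.Pairwise (fun a b => Commute (P a) (P b)) L := by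
    intro L
    induction L with
    | nil => exact List.Pairwise.nil
    | cons a L ih => exact List.Pairwise.cons (fun b _ => hcomm a b) ih
  have hpair : List.Pairwise Commute (L₀.map P) :=
    List.pairwise_map.2 (hpair_aux L₀)
  have hPall_eq : ∀ i, ∃ R : Module.End E (CliffordAlgebra Q),
      Pall = R * P i ∧ Pall = P i * R := by
    intro i
    have hmem : i ∈ L₀ := List.mem_finRange i
    have hperm : List.Perm (L₀.map P) (P i :: (L₀.erase i).map P) := by
      simpa using (List.perm_cons_erase hmem).map P
    refine ⟨((L₀.erase i).map P).prod, ?_, ?_⟩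
    · have h2 : List.Perm (L₀.map P) (((L₀.erase i).map P) ++ [P i]) :=
        hperm.trans (List.perm_append_singleton _ _).symm
      rw [hPall, h2.prod_eq' hpair, List.prod_append, List.prod_singleton]
    · rw [hPall, hperm.prod_eq' hpair, List.prod_cons]
  have hPall_mu : ∀ (i) (x : CliffordAlgebra Q),
      Pall (μ i x) = (2:E)⁻¹ • Pall (δ i x) := by
    intro i x
    obtain ⟨R, h1, h2⟩ := hPall_eq i
    calc Pall (μ i x) = R (P i (μ i x)) := by rw [h1, Module.End.mul_apply]
      _ = (2:E)⁻¹ • R (δ i x) := by rw [hPμ, map_smul]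
      _ = (2:E)⁻¹ • R (P i (δ i x)) := by rw [hPδ]
      _ = (2:E)⁻¹ • Pall (δ i x) := by rw [h1, Module.End.mul_apply]
  -- monomials and spans
  set mlist : List (Fin (Module.finrank E M)) → CliffordAlgebra Q :=
    fun L => (L.map fun i => ι Q (bb i)).prod with hml
  have hm_nil : mlist [] = 1 := by simp [hml]
  have hm_cons : ∀ j L, mlist (j :: L) = μ j (mlist L) := by
    intro j L; simp [hml, hμdef]
  set Sp : ℕ → Submodule E (CliffordAlgebra Q) :=
    fun k => Submodule.span E (mlist '' {L | L.length ≤ k}) with hSp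
  have hgen : ∀ L k, L.length ≤ k → mlist L ∈ Sp k := fun L k h =>
    Submodule.subset_span ⟨L, h, rfl⟩
  have hSpMono : ∀ {k k'}, k ≤ k' → Sp k ≤ Sp k' := fun {k k'} h =>
    Submodule.span_mono (Set.image_mono fun L hL => le_trans hL h)
  have hμSp : ∀ (j) {k} {x : CliffordAlgebra Q}, x ∈ Sp k → μ j x ∈ Sp (k+1) := by
    intro j k x hx
    have hle : Sp k ≤ Submodule.comap (μ j) (Sp (k+1)) := by
      rw [hSp]
      refine Submodule.span_le.2 ?_
      rintro _ ⟨L, hL, rfl⟩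
      simp only [Submodule.mem_comap, ← hm_cons]
      exact hgen (j :: L) _ (Nat.succ_le_succ hL)
    exact hle hx
  have hδm : ∀ (L : List (Fin (Module.finrank E M))) (i) (k), L.length ≤ k + 1 →
      δ i (mlist L) ∈ Sp k := by
    intro L
    induction L with
    | nil => intro i k _; rw [hm_nil, show (1 : CliffordAlgebra Q) = algebraMap E _ 1 by simp,
        hδdef]; rw [contractLeft_algebraMap]; exact Submodule.zero_mem _
    | cons j L ih =>
        intro i k hk
        rw [hm_cons, hδμ]
        have h1 : QuadraticMap.polar Q (bb i) (bb j) • mlist L ∈ Sp k :=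
          Submodule.smul_mem _ _ (hgen L k (Nat.lt_succ_iff.1 hk))
        have h2 : μ j (δ i (mlist L)) ∈ Sp k := by
          cases k with
          | zero =>
              have : L = [] := List.length_eq_zero_iff.1 (Nat.le_zero.1 (Nat.lt_succ_iff.1 hk))
              subst this
              rw [hm_nil, show (1 : CliffordAlgebra Q) = algebraMap E _ 1 by simp, hδdef,
                contractLeft_algebraMap, map_zero]
              exact Submodule.zero_mem _
          | succ k' =>
              exact hμSp j (ih i k' (Nat.lt_succ_iff.1 hk))
        exact Submodule.sub_mem _ h1 h2
  have hspan : ∀ x : CliffordAlgebra Q, ∃ k, x ∈ Sp k := by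
    intro x
    induction x using CliffordAlgebra.left_induction with
    | algebraMap r =>
        refine ⟨0, ?_⟩
        rw [Algebra.algebraMap_eq_smul_one, ← hm_nil]
        exact Submodule.smul_mem _ _ (hgen [] 0 le_rfl)
    | add x y hx hy =>
        obtain ⟨k, hk⟩ := hx; obtain ⟨k', hk'⟩ := hy
        exact ⟨max k k', Submodule.add_mem _ (hSpMono (le_max_left _ _) hk)
          (hSpMono (le_max_right _ _) hk')⟩
    | ι_mul x m hx =>
        obtain ⟨k, hk⟩ := hx
        refine ⟨k + 1, ?_⟩
        have : ι Q m * x = ∑ i, bb.repr m i • μ i x := by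
          conv_lhs => rw [← Module.Basis.sum_repr bb m]
          rw [map_sum, Finset.sum_mul]
          refine Finset.sum_congr rfl fun i _ => ?_
          rw [map_smul, smul_mul_assoc]
          simp [hμdef]
        rw [this]
        exact Submodule.sum_mem _ fun i _ => Submodule.smul_mem _ _ (hμSp i hk)
  have hP1 : ∀ i, P i (1 : CliffordAlgebra Q) = 1 := by
    intro i
    rw [hPapply]
    have : μ i (1 : CliffordAlgebra Q) = ι Q (bb i) := by simp [hμdef]
    rw [this, hδdef]
    rw [contractLeft_ι, QuadraticMap.polarBilin_apply_apply,
      Algebra.algebraMap_eq_smul_one, smul_smul,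
      inv_mul_cancel₀ (hp i), one_smul]
  have hPall1 : Pall (1 : CliffordAlgebra Q) = 1 := hfix_list _ 1 hP1
  have hone : (1 : CliffordAlgebra Q) ∈ Submodule.span E ({1} : Set (CliffordAlgebra Q)) :=
    Submodule.subset_span rfl
  have hmain : ∀ k, Sp k ≤ Submodule.comap Pall
      (Submodule.span E ({1} : Set (CliffordAlgebra Q))) := by
    intro k
    induction k with
    | zero =>
        rw [hSp]
        refine Submodule.span_le.2 ?_
        rintro _ ⟨L, hL, rfl⟩
        have : L = [] := List.length_eq_zero_iff.1 (Nat.le_zero.1 hL)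
        subst this
        simp only [SetLike.mem_coe, Submodule.mem_comap, hm_nil, hPall1]
        exact hone
    | succ k ih =>
        rw [hSp]
        refine Submodule.span_le.2 ?_
        rintro _ ⟨L, hL, rfl⟩
        cases L with
        | nil =>
            simp only [SetLike.mem_coe, Submodule.mem_comap, hm_nil, hPall1]
            exact hone
        | cons j L' =>
            simp only [SetLike.mem_coe, Submodule.mem_comap]
            rw [hm_cons, hPall_mu]
            refine Submodule.smul_mem _ _ ?_
            have hL' : L'.length ≤ k + 1 := by
              have : (j :: L').length ≤ k + 1 := hL
              simpa using le_trans this (Nat.le_succ _)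
            exact ih (hδm L' j k hL')
  obtain ⟨k, hk⟩ := hspan z
  have hzmem : z ∈ Submodule.span E ({1} : Set (CliffordAlgebra Q)) := by
    have := hmain k hk
    rw [Submodule.mem_comap, hPallz] at this
    exact this
  obtain ⟨r, hr⟩ := Submodule.mem_span_singleton.1 hzmem
  exact ⟨r, by rw [← hr, Algebra.algebraMap_eq_smul_one]⟩

theorem gammaChar [FiniteDimensional E M] (Q : QuadraticForm E M) (h2 : (2:E) ≠ 0)
    (twisted : ∀ z : CliffordAlgebra Q, (∀ v, z * ι Q v = ι Q v * involute z) →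
      ∃ r : E, z = algebraMap E _ r)
    (x : CliffordAlgebra Q) :
    (∃ u : (CliffordAlgebra Q)ˣ,
        (∀ w : M, ∃ w' : M, (u : CliffordAlgebra Q) * ι Q w *
          involute (↑u⁻¹ : CliffordAlgebra Q) = ι Q w') ∧ (u : CliffordAlgebra Q) = x) ↔
    ((∃ l : E, l ≠ 0 ∧ x * involute (reverse x) = algebraMap E _ l ∧
        involute (reverse x) * x = algebraMap E _ l) ∧
      ∀ w : M, ∃ w' : M, x * ι Q w * reverse x = ι Q w') := by
  haveI : Invertible (2:E) := invertibleOfNonzero h2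
  constructor
  · rintro ⟨u, hu, rfl⟩
    set xx : CliffordAlgebra Q := (↑u : CliffordAlgebra Q) with hxx
    choose ww hww using hu
    have hxi2 : involute (↑u⁻¹ : CliffordAlgebra Q) * involute xx = 1 := by
      rw [← map_mul, Units.inv_mul, map_one]
    have hbar1 : involute (reverse xx) * involute (reverse (↑u⁻¹ : CliffordAlgebra Q)) = 1 := by
      rw [← map_mul, ← reverse.map_mul, Units.inv_mul, reverse.map_one, map_one]
    have hbar2 : involute (reverse (↑u⁻¹ : CliffordAlgebra Q)) * involute (reverse xx) = 1 := by
      rw [← map_mul, ← reverse.map_mul, Units.mul_inv, reverse.map_one, map_one]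
    have hi : ∀ w, xx * ι Q w = ι Q (ww w) * involute xx := by
      intro w
      have h := congrArg (· * involute xx) (hww w)
      simpa only [mul_assoc, hxi2, mul_one] using h
    have hii : ∀ w, involute (reverse xx) * ι Q (ww w) = ι Q w * reverse xx := by
      intro w
      have h := congrArg (reverse (Q := Q)) (hww w)
      rw [reverse.map_mul, reverse.map_mul, reverse_ι, reverse_involute] at h
      rw [reverse_ι] at h
      have h2 := congrArg (involute (reverse xx) * ·) h
      simp only [← mul_assoc, hbar1, one_mul] at h2
      exact h2.symm
    set y : CliffordAlgebra Q := involute (reverse xx) * xx with hy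
    have hyΓ : ∀ w, y * ι Q w = ι Q w * involute y := by
      intro w
      have hinv : involute y = reverse xx * involute xx := by
        rw [hy, map_mul, involute_involute]
      calc y * ι Q w = involute (reverse xx) * (xx * ι Q w) := by rw [hy, mul_assoc]
        _ = involute (reverse xx) * (ι Q (ww w) * involute xx) := by rw [hi w]
        _ = (involute (reverse xx) * ι Q (ww w)) * involute xx := by rw [mul_assoc]
        _ = (ι Q w * reverse xx) * involute xx := by rw [hii w]
        _ = ι Q w * involute y := by rw [hinv, mul_assoc]
    obtain ⟨l, hl⟩ := twisted y hyΓ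
    have hyunit : y * ((↑u⁻¹ : CliffordAlgebra Q) * involute (reverse (↑u⁻¹ : CliffordAlgebra Q))) = 1 := by
      have hstep : xx * ((↑u⁻¹ : CliffordAlgebra Q) * involute (reverse (↑u⁻¹ : CliffordAlgebra Q)))
          = involute (reverse (↑u⁻¹ : CliffordAlgebra Q)) := by
        rw [← mul_assoc, hxx, Units.mul_inv, one_mul]
      rw [hy, mul_assoc, hstep, hbar1]
    have hl0 : l ≠ 0 := by
      rintro rfl
      rw [map_zero] at hl
      rw [hl, zero_mul] at hyunit
      exact zero_ne_one hyunit
    have hbarx : involute (reverse xx) = algebraMap E _ l * (↑u⁻¹ : CliffordAlgebra Q) := by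
      have := congrArg (· * (↑u⁻¹ : CliffordAlgebra Q)) (hy.symm.trans hl)
      simpa only [mul_assoc, hxx, Units.mul_inv, mul_one] using this
    refine ⟨⟨l, hl0, ?_, hy ▸ hl⟩, ?_⟩
    · rw [hbarx, ← mul_assoc, ← Algebra.commutes l xx, mul_assoc, hxx, Units.mul_inv, mul_one]
    · intro w
      refine ⟨l • ww w, ?_⟩
      have step : xx * ι Q w * reverse xx = ι Q (ww w) * (involute xx * reverse xx) := by
        have h := congrArg (· * (involute xx * reverse xx)) (hww w)
        simp only [mul_assoc] at h
        have hmid : involute (↑u⁻¹ : CliffordAlgebra Q) * (involute xx * reverse xx)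
            = reverse xx := by
          rw [← mul_assoc, hxi2, one_mul]
        rw [hmid] at h
        simpa only [mul_assoc] using h
      have hir : involute xx * reverse xx = algebraMap E _ l := by
        have : involute (xx * involute (reverse xx)) = involute (algebraMap E _ l) := by
          rw [hbarx, ← mul_assoc, ← Algebra.commutes l xx, mul_assoc, hxx, Units.mul_inv, mul_one]
        rw [map_mul, involute_involute, AlgHom.commutes] at this
        exact this
      rw [step, hir, ← Algebra.commutes, ← Algebra.smul_def, map_smul]
  · rintro ⟨⟨l, hl, h1, h2'⟩, hW⟩
    have hul : x * (l⁻¹ • involute (reverse x)) = 1 := by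
      rw [mul_smul_comm, h1, Algebra.algebraMap_eq_smul_one, smul_smul,
        inv_mul_cancel₀ hl, one_smul]
    have hul' : (l⁻¹ • involute (reverse x)) * x = 1 := by
      rw [smul_mul_assoc, h2', Algebra.algebraMap_eq_smul_one, smul_smul,
        inv_mul_cancel₀ hl, one_smul]
    refine ⟨⟨x, l⁻¹ • involute (reverse x), hul, hul'⟩, fun w => ?_, rfl⟩
    obtain ⟨w', hw'⟩ := hW w
    refine ⟨l⁻¹ • w', ?_⟩
    show x * ι Q w * involute (l⁻¹ • involute (reverse x)) = _
    rw [map_smul, involute_involute, mul_smul_comm, hw', map_smul]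


end General

section Matrices

variable {F : Type*} [Field F] {V : Type*} [AddCommGroup V] [Module F V]
  {Q : QuadraticForm F V}

/-- Clifford conjugation. -/
noncomputable def bbar (x : CliffordAlgebra Q) : CliffordAlgebra Q :=
  involute (reverse x)

lemma bbar_mul (x y : CliffordAlgebra Q) : bbar (x * y) = bbar y * bbar x := by
  simp [bbar, reverse.map_mul, map_mul]

lemma bbar_add (x y : CliffordAlgebra Q) : bbar (x + y) = bbar x + bbar y := by
  simp [bbar]

lemma bbar_bbar (x : CliffordAlgebra Q) : bbar (bbar x) = x := by
  simp [bbar, reverse_involute, reverse_reverse, involute_involute]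

lemma bbar_algebraMap (r : F) : bbar (algebraMap F (CliffordAlgebra Q) r) = algebraMap F _ r := by
  simp [bbar]

lemma bbar_one : bbar (1 : CliffordAlgebra Q) = 1 := by simp [bbar]

lemma bbar_ι (v : V) : bbar (ι Q v) = -ι Q v := by simp [bbar]

lemma involute_bbar (x : CliffordAlgebra Q) : involute (bbar x) = reverse x := by
  simp [bbar, involute_involute]

lemma reverse_bbar (x : CliffordAlgebra Q) : reverse (bbar x) = involute x := by
  simp [bbar, reverse_involute, reverse_reverse]

lemma bbar_smul (r : F) (x : CliffordAlgebra Q) : bbar (r • x) = r • bbar x := by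
  simp [bbar]



/-- entrywise grade involution with the off-diagonal sign twist;
corresponds to `involute` under the Vahlen isomorphism. -/
noncomputable def invM (A : Matrix (Fin 2) (Fin 2) (CliffordAlgebra Q)) :
    Matrix (Fin 2) (Fin 2) (CliffordAlgebra Q) :=
  !![involute (A 0 0), -involute (A 0 1); -involute (A 1 0), involute (A 1 1)]

/-- corresponds to `reverse` under the Vahlen isomorphism. -/
noncomputable def revM (A : Matrix (Fin 2) (Fin 2) (CliffordAlgebra Q)) :
    Matrix (Fin 2) (Fin 2) (CliffordAlgebra Q) :=
  !![bbar (A 1 1), bbar (A 0 1); bbar (A 1 0), bbar (A 0 0)]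

/-- corresponds to Clifford conjugation under the Vahlen isomorphism. -/
noncomputable def barM (A : Matrix (Fin 2) (Fin 2) (CliffordAlgebra Q)) :
    Matrix (Fin 2) (Fin 2) (CliffordAlgebra Q) :=
  !![reverse (A 1 1), -reverse (A 0 1); -reverse (A 1 0), reverse (A 0 0)]

lemma m2ext {X Y : Matrix (Fin 2) (Fin 2) (CliffordAlgebra Q)}
    (h00 : X 0 0 = Y 0 0) (h01 : X 0 1 = Y 0 1)
    (h10 : X 1 0 = Y 1 0) (h11 : X 1 1 = Y 1 1) : X = Y := by
  ext i j
  fin_cases i <;> fin_cases j <;> assumption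

lemma mulA (X Y : Matrix (Fin 2) (Fin 2) (CliffordAlgebra Q)) (i j : Fin 2) :
    (X * Y) i j = X i 0 * Y 0 j + X i 1 * Y 1 j := by
  rw [Matrix.mul_apply, Fin.sum_univ_two]

@[simp] lemma invM00 (A : Matrix (Fin 2) (Fin 2) (CliffordAlgebra Q)) :
    invM A 0 0 = involute (A 0 0) := rfl
@[simp] lemma invM01 (A : Matrix (Fin 2) (Fin 2) (CliffordAlgebra Q)) :
    invM A 0 1 = -involute (A 0 1) := rfl
@[simp] lemma invM10 (A : Matrix (Fin 2) (Fin 2) (CliffordAlgebra Q)) :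
    invM A 1 0 = -involute (A 1 0) := rfl
@[simp] lemma invM11 (A : Matrix (Fin 2) (Fin 2) (CliffordAlgebra Q)) :
    invM A 1 1 = involute (A 1 1) := rfl

@[simp] lemma revM00 (A : Matrix (Fin 2) (Fin 2) (CliffordAlgebra Q)) :
    revM A 0 0 = bbar (A 1 1) := rfl
@[simp] lemma revM01 (A : Matrix (Fin 2) (Fin 2) (CliffordAlgebra Q)) :
    revM A 0 1 = bbar (A 0 1) := rfl
@[simp] lemma revM10 (A : Matrix (Fin 2) (Fin 2) (CliffordAlgebra Q)) :
    revM A 1 0 = bbar (A 1 0) := rfl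
@[simp] lemma revM11 (A : Matrix (Fin 2) (Fin 2) (CliffordAlgebra Q)) :
    revM A 1 1 = bbar (A 0 0) := rfl

@[simp] lemma barM00 (A : Matrix (Fin 2) (Fin 2) (CliffordAlgebra Q)) :
    barM A 0 0 = reverse (A 1 1) := rfl
@[simp] lemma barM01 (A : Matrix (Fin 2) (Fin 2) (CliffordAlgebra Q)) :
    barM A 0 1 = -reverse (A 0 1) := rfl
@[simp] lemma barM10 (A : Matrix (Fin 2) (Fin 2) (CliffordAlgebra Q)) :
    barM A 1 0 = -reverse (A 1 0) := rfl
@[simp] lemma barM11 (A : Matrix (Fin 2) (Fin 2) (CliffordAlgebra Q)) :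
    barM A 1 1 = reverse (A 0 0) := rfl

lemma algM (l : F) (i j : Fin 2) :
    algebraMap F (Matrix (Fin 2) (Fin 2) (CliffordAlgebra Q)) l i j
      = if i = j then algebraMap F (CliffordAlgebra Q) l else 0 := by
  rw [Matrix.algebraMap_eq_diagonal]
  by_cases h : i = j
  · subst h; simp
  · simp [Matrix.diagonal_apply_ne _ h, h]

lemma invM_mul (A B : Matrix (Fin 2) (Fin 2) (CliffordAlgebra Q)) :
    invM (A * B) = invM A * invM B := by
  refine m2ext ?_ ?_ ?_ ?_ <;>
    simp [mulA, map_add, map_mul, mul_neg, neg_mul, neg_add] <;> abel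

lemma invM_add (A B : Matrix (Fin 2) (Fin 2) (CliffordAlgebra Q)) :
    invM (A + B) = invM A + invM B := by
  refine m2ext ?_ ?_ ?_ ?_ <;>
    simp [Matrix.add_apply, map_add, neg_add] <;> abel

lemma revM_mul (A B : Matrix (Fin 2) (Fin 2) (CliffordAlgebra Q)) :
    revM (A * B) = revM B * revM A := by
  refine m2ext ?_ ?_ ?_ ?_ <;>
    simp [mulA, bbar_add, bbar_mul] <;> abel

lemma revM_add (A B : Matrix (Fin 2) (Fin 2) (CliffordAlgebra Q)) :
    revM (A + B) = revM A + revM B := by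
  refine m2ext ?_ ?_ ?_ ?_ <;> simp [Matrix.add_apply, bbar_add]

lemma invM_revM (A : Matrix (Fin 2) (Fin 2) (CliffordAlgebra Q)) :
    invM (revM A) = barM A := by
  refine m2ext ?_ ?_ ?_ ?_ <;> simp [involute_bbar]

lemma revM_revM (A : Matrix (Fin 2) (Fin 2) (CliffordAlgebra Q)) :
    revM (revM A) = A := by
  refine m2ext ?_ ?_ ?_ ?_ <;> simp [bbar_bbar]

lemma invM_alg (l : F) :
    invM (algebraMap F (Matrix (Fin 2) (Fin 2) (CliffordAlgebra Q)) l)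
      = algebraMap F _ l := by
  refine m2ext ?_ ?_ ?_ ?_ <;> simp [algM]

lemma revM_alg (l : F) :
    revM (algebraMap F (Matrix (Fin 2) (Fin 2) (CliffordAlgebra Q)) l)
      = algebraMap F _ l := by
  refine m2ext ?_ ?_ ?_ ?_ <;> simp [algM, bbar_algebraMap, bbar]



section Transfer

variable {QW : QuadraticForm F (V × F × F)}
  (g : CliffordAlgebra QW →ₐ[F] Matrix (Fin 2) (Fin 2) (CliffordAlgebra Q))
  (hg : ∀ (v : V) (l₁ l₂ : F),
    g (ι QW (v, l₁, l₂)) = !![ι Q v, algebraMap F (CliffordAlgebra Q) l₁;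
      algebraMap F (CliffordAlgebra Q) l₂, -(ι Q v)])

include hg

lemma g_involute (y : CliffordAlgebra QW) : g (involute y) = invM (g y) := by
  induction y using CliffordAlgebra.induction with
  | algebraMap r =>
      rw [involute.commutes, AlgHom.commutes, invM_alg]
  | ι w =>
      obtain ⟨v, l₁, l₂⟩ := w
      rw [involute_ι, map_neg, hg]
      refine m2ext ?_ ?_ ?_ ?_ <;> simp [Matrix.neg_apply]
  | mul x y hx hy =>
      rw [map_mul, map_mul, map_mul, hx, hy, invM_mul]
  | add x y hx hy =>
      rw [map_add, map_add, map_add, hx, hy, invM_add]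

lemma g_reverse (y : CliffordAlgebra QW) : g (reverse y) = revM (g y) := by
  induction y using CliffordAlgebra.induction with
  | algebraMap r =>
      rw [reverse.commutes, AlgHom.commutes, revM_alg]
  | ι w =>
      obtain ⟨v, l₁, l₂⟩ := w
      rw [reverse_ι, hg]
      refine m2ext ?_ ?_ ?_ ?_ <;>
        simp [bbar_ι, bbar_algebraMap, show bbar (-ι Q v) = ι Q v by
          rw [show bbar (-ι Q v) = -bbar (ι Q v) by simp [bbar], bbar_ι, neg_neg]]
  | mul x y hx hy =>
      rw [reverse.map_mul, map_mul, map_mul, hx, hy, revM_mul]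
  | add x y hx hy =>
      rw [map_add, map_add, map_add, hx, hy, revM_add]

lemma g_bbar (y : CliffordAlgebra QW) : g (bbar y) = barM (g y) := by
  rw [bbar, g_involute g hg, g_reverse g hg, invM_revM]

end Transfer


lemma bbar_eq (x : CliffordAlgebra Q) : bbar x = involute (reverse x) := rfl

lemma bbar_neg (x : CliffordAlgebra Q) : bbar (-x) = -bbar x := by simp [bbar]

/-- the matrix corresponding to a vector of `W = V ⊥ P`. -/
noncomputable def mw (Q : QuadraticForm F V) (w : V × F × F) :
    Matrix (Fin 2) (Fin 2) (CliffordAlgebra Q) :=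
  !![ι Q w.1, algebraMap F _ w.2.1; algebraMap F _ w.2.2, -ι Q w.1]

@[simp] lemma mw00 (w : V × F × F) : mw Q w 0 0 = ι Q w.1 := rfl
@[simp] lemma mw01 (w : V × F × F) : mw Q w 0 1 = algebraMap F _ w.2.1 := rfl
@[simp] lemma mw10 (w : V × F × F) : mw Q w 1 0 = algebraMap F _ w.2.2 := rfl
@[simp] lemma mw11 (w : V × F × F) : mw Q w 1 1 = -ι Q w.1 := rfl

lemma vahlen_iff (A : Matrix (Fin 2) (Fin 2) (CliffordAlgebra Q)) :
    VahlenConds Q A ↔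
      ((∃ l : F, l ≠ 0 ∧ A * barM A = algebraMap F _ l ∧
          barM A * A = algebraMap F _ l) ∧
        ∀ w : V × F × F, ∃ w' : V × F × F, A * mw Q w * revM A = mw Q w') := by
  constructor
  · rintro ⟨⟨l, hl0, h1a, h1b⟩, ⟨h2a, h2b⟩, ⟨h3a, h3b⟩,
      ⟨⟨sa, h4a⟩, ⟨sb, h4b⟩, ⟨sc, h4c⟩, ⟨sd, h4d⟩⟩, ⟨⟨v5a, h5a⟩, ⟨v5b, h5b⟩⟩, h6, h7⟩
    simp only [reverse_ι, involute_ι, ← bbar_eq, bbar_ι] at h4a h4b h4c h4d h5a h5b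
    have h1a' : A 1 1 * reverse (A 0 0) - A 1 0 * reverse (A 0 1)
        = algebraMap F (CliffordAlgebra Q) l := by
      have := congrArg (reverse (Q := Q)) h1a
      simpa only [map_sub, reverse.map_mul, reverse_reverse, reverse.commutes] using this
    have h1b' : reverse (A 0 0) * A 1 1 - reverse (A 1 0) * A 0 1
        = algebraMap F (CliffordAlgebra Q) l := by
      have := congrArg (reverse (Q := Q)) h1b
      simpa only [map_sub, reverse.map_mul, reverse_reverse, reverse.commutes] using this
    refine ⟨⟨l, hl0, ?_, ?_⟩, ?_⟩
    · refine m2ext ?_ ?_ ?_ ?_ <;>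
        simp only [mulA, barM00, barM01, barM10, barM11, mul_neg, neg_mul, algM,
          if_pos, if_neg, Fin.zero_eq_one_iff, Fin.one_eq_zero_iff, Nat.succ_ne_self,
          ite_true, ite_false, reduceIte]
      · rw [← sub_eq_add_neg]; exact h1a
      · rw [neg_add_eq_sub]; exact h2a
      · rw [← sub_eq_add_neg]; exact h2b
      · rw [neg_add_eq_sub]; exact h1a'
    · refine m2ext ?_ ?_ ?_ ?_ <;>
        simp only [mulA, barM00, barM01, barM10, barM11, mul_neg, neg_mul, algM,
          if_pos, if_neg, Fin.zero_eq_one_iff, Fin.one_eq_zero_iff, Nat.succ_ne_self,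
          ite_true, ite_false, reduceIte]
      · rw [← sub_eq_add_neg]; exact h1b
      · rw [← sub_eq_add_neg]; exact h3b
      · rw [neg_add_eq_sub]; exact h3a
      · rw [neg_add_eq_sub]; exact h1b'
    · rintro ⟨v, l1, l2⟩
      obtain ⟨w7, hw7⟩ := h7 v
      obtain ⟨⟨s6a, h6a⟩, ⟨s6b, h6b⟩⟩ := h6 v
      simp only [reverse_ι, involute_ι, ← bbar_eq, bbar_ι] at hw7 h6a h6b
      have d7 := congrArg (bbar (Q := Q)) hw7
      simp only [bbar_add, bbar_mul, bbar_bbar, bbar_neg, bbar_ι, neg_neg] at d7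
      have d5a := congrArg (bbar (Q := Q)) h5a
      simp only [bbar_mul, bbar_bbar, bbar_ι] at d5a
      have d5b := congrArg (bbar (Q := Q)) h5b
      simp only [bbar_mul, bbar_bbar, bbar_ι] at d5b
      refine ⟨(w7 + l2 • v5a + l1 • v5b, s6a + l2 * sb + l1 * sa,
        s6b + l2 * sd + l1 * sc), ?_⟩
      refine m2ext ?_ ?_ ?_ ?_
      · rw [mulA, mulA, mulA]
        simp only [mw00, mw01, mw10, mw11, revM00, revM10]
        rw [map_add, map_add, map_smul, map_smul, ← hw7, ← h5a, ← h5b,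
          Algebra.smul_def, Algebra.smul_def, ← Algebra.commutes l2 (A 0 1),
          ← Algebra.commutes l1 (A 0 0)]
        noncomm_ring
      · rw [mulA, mulA, mulA]
        simp only [mw00, mw01, mw10, mw11, revM01, revM11]
        rw [map_add, map_add, map_mul, map_mul, ← h6a, ← h4b, ← h4a,
          ← Algebra.commutes l2 (A 0 1), ← Algebra.commutes l1 (A 0 0)]
        noncomm_ring
      · rw [mulA, mulA, mulA]
        simp only [mw00, mw01, mw10, mw11, revM00, revM10]
        rw [map_add, map_add, map_mul, map_mul, ← h6b, ← h4d, ← h4c,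
          ← Algebra.commutes l2 (A 1 1), ← Algebra.commutes l1 (A 1 0)]
        noncomm_ring
      · rw [mulA, mulA, mulA]
        simp only [mw00, mw01, mw10, mw11, revM01, revM11]
        rw [map_add, map_add, map_smul, map_smul, neg_add, neg_add,
          ← smul_neg, ← smul_neg, ← d7, ← d5a, ← d5b,
          Algebra.smul_def, Algebra.smul_def, ← Algebra.commutes l2 (A 1 1),
          ← Algebra.commutes l1 (A 1 0)]
        noncomm_ring
  · rintro ⟨⟨l, hl0, hN1, hN2⟩, hW⟩
    have sset := 0
    have q100 := Matrix.ext_iff.mpr hN1 0 0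
    have q101 := Matrix.ext_iff.mpr hN1 0 1
    have q110 := Matrix.ext_iff.mpr hN1 1 0
    have q200 := Matrix.ext_iff.mpr hN2 0 0
    have q201 := Matrix.ext_iff.mpr hN2 0 1
    have q210 := Matrix.ext_iff.mpr hN2 1 0
    simp only [mulA, barM00, barM01, barM10, barM11, mul_neg, neg_mul, algM,
      Fin.zero_eq_one_iff, Fin.one_eq_zero_iff, Nat.succ_ne_self,
      ite_true, ite_false, reduceIte] at q100 q101 q110 q200 q201 q210
    obtain ⟨wE, hE⟩ := hW (0, 1, 0)
    obtain ⟨wF, hF⟩ := hW (0, 0, 1)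
    have qE00 := Matrix.ext_iff.mpr hE 0 0
    have qE01 := Matrix.ext_iff.mpr hE 0 1
    have qE10 := Matrix.ext_iff.mpr hE 1 0
    have qF00 := Matrix.ext_iff.mpr hF 0 0
    have qF01 := Matrix.ext_iff.mpr hF 0 1
    have qF10 := Matrix.ext_iff.mpr hF 1 0
    simp only [mulA, mw00, mw01, mw10, mw11, revM00, revM01, revM10, revM11,
      map_zero, map_one, neg_zero, mul_zero, zero_mul, add_zero, zero_add,
      mul_one] at qE00 qE01 qE10 qF00 qF01 qF10
    refine ⟨⟨l, hl0, ?_, ?_⟩, ⟨?_, ?_⟩, ⟨?_, ?_⟩, ⟨⟨wE.2.1, ?_⟩, ⟨wF.2.1, ?_⟩,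
      ⟨wE.2.2, ?_⟩, ⟨wF.2.2, ?_⟩⟩, ⟨⟨wF.1, ?_⟩, ⟨wE.1, ?_⟩⟩, ?_, ?_⟩
    · rw [sub_eq_add_neg]; exact q100
    · rw [sub_eq_add_neg]; exact q200
    · rw [← neg_add_eq_sub]; exact q101
    · rw [sub_eq_add_neg]; exact q110
    · rw [← neg_add_eq_sub]; exact q210
    · rw [sub_eq_add_neg]; exact q201
    · exact qE01
    · exact qF01
    · exact qE10
    · exact qF10
    · exact qF00
    · exact qE00
    · intro v
      obtain ⟨wv, hv⟩ := hW (v, 0, 0)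
      have qv01 := Matrix.ext_iff.mpr hv 0 1
      have qv10 := Matrix.ext_iff.mpr hv 1 0
      simp only [mulA, mw00, mw01, mw10, mw11, revM00, revM01, revM10, revM11,
        map_zero, mul_zero, zero_mul, add_zero, zero_add] at qv01 qv10
      simp only [reverse_ι, involute_ι, ← bbar_eq, bbar_ι]
      exact ⟨⟨wv.2.1, qv01⟩, ⟨wv.2.2, qv10⟩⟩
    · intro v
      obtain ⟨wv, hv⟩ := hW (v, 0, 0)
      have qv00 := Matrix.ext_iff.mpr hv 0 0
      simp only [mulA, mw00, mw01, mw10, mw11, revM00, revM01, revM10, revM11,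
        map_zero, mul_zero, zero_mul, add_zero, zero_add] at qv00
      simp only [reverse_ι, involute_ι, ← bbar_eq, bbar_ι]
      exact ⟨wv.1, qv00⟩

end Matrices

end VahlenAux

open VahlenAux

/-- Characterization of the Vahlen group `𝒱(V) = φ(Γ(W))` (and of `φ(Γ⁰(W))`)
inside `M₂(C(V))` by conditions (1)–(7) (resp. together with the parity
condition (8)), where `φ = g` is the Vahlen isomorphism `C(W) ≅ M₂(C(V))`. -/
theorem stmt_11 {F : Type*} [Field F] (hchar : (2 : F) ≠ 0)
    {V : Type*} [AddCommGroup V] [Module F V] [FiniteDimensional F V]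
    (S : LinearMap.BilinForm F V) (hS : ∀ x y, S x y = S y x)
    (hnd : ∀ x : V, (∀ y : V, S x y = 0) → x = 0)
    (Q : QuadraticForm F V) (hQ : ∀ v, Q v = -(S v v))
    (QW : QuadraticForm F (V × F × F))
    (hQW : ∀ p : V × F × F, QW p = -(S p.1 p.1 - p.2.1 * p.2.2))
    (g : CliffordAlgebra QW →ₐ[F] Matrix (Fin 2) (Fin 2) (CliffordAlgebra Q))
    (hg : ∀ (v : V) (l₁ l₂ : F),
      g (ι QW (v, l₁, l₂)) = !![ι Q v, algebraMap F (CliffordAlgebra Q) l₁;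
        algebraMap F (CliffordAlgebra Q) l₂, -(ι Q v)])
    (hbij : Function.Bijective g) :
    ∀ A : Matrix (Fin 2) (Fin 2) (CliffordAlgebra Q),
      ((∃ x : (CliffordAlgebra QW)ˣ,
          (∀ w : V × F × F, ∃ w' : V × F × F,
            (x : CliffordAlgebra QW) * ι QW w *
              involute (↑x⁻¹ : CliffordAlgebra QW) = ι QW w') ∧
          g ↑x = A) ↔ VahlenConds Q A) ∧
      ((∃ x : (CliffordAlgebra QW)ˣ,
          (∀ w : V × F × F, ∃ w' : V × F × F,
            (x : CliffordAlgebra QW) * ι QW w *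
              involute (↑x⁻¹ : CliffordAlgebra QW) = ι QW w') ∧
          involute (x : CliffordAlgebra QW) = (x : CliffordAlgebra QW) ∧
          g ↑x = A) ↔
        (VahlenConds Q A ∧
          involute (A 0 0) = A 0 0 ∧ involute (A 1 1) = A 1 1 ∧
          involute (A 0 1) = -(A 0 1) ∧ involute (A 1 0) = -(A 1 0))) := by
  intro A
  classical
  have hginj : Function.Injective g := hbij.1
  obtain ⟨x₀, hx₀⟩ := hbij.2 A
  -- nondegeneracy of the polar form of QW
  have hpolarQW : ∀ p : V × F × F,
      (∀ q : V × F × F, QuadraticMap.polar QW p q = 0) → p = 0 := by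
    intro p hp
    have hpol : ∀ q : V × F × F, QuadraticMap.polar QW p q
        = -(S p.1 q.1) - S q.1 p.1 + (p.2.1 * q.2.2 + q.2.1 * p.2.2) := by
      intro q
      rw [QuadraticMap.polar, hQW, hQW, hQW]
      obtain ⟨v, a, b⟩ := p
      obtain ⟨u, c, d⟩ := q
      show -((S (v + u)) (v + u) - (a + c) * (b + d)) - _ - _ = _
      simp only [map_add, LinearMap.add_apply]
      ring
    have ha : p.2.1 = 0 := by
      have := hp (0, 0, 1)
      rw [hpol] at this
      simpa using this
    have hb : p.2.2 = 0 := by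
      have := hp (0, 1, 0)
      rw [hpol] at this
      simpa using this
    have hv : p.1 = 0 := by
      apply hnd
      intro u
      have h0 := hp (u, 0, 0)
      rw [hpol] at h0
      simp only [mul_zero, zero_mul, add_zero] at h0
      rw [hS u p.1] at h0
      have h2 : (2 : F) * S p.1 u = 0 := by rw [two_mul]; linear_combination -h0
      exact (mul_eq_zero.1 h2).resolve_left hchar
    exact Prod.ext hv (Prod.ext ha hb)
  have twisted := twisted_central QW hchar hpolarQW
  have elem := gammaChar QW hchar twisted x₀
  have hmw : ∀ w : V × F × F, g (ι QW w) = mw Q w := fun w => hg w.1 w.2.1 w.2.2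
  have hgb : g (involute (reverse x₀)) = barM A := by
    have := g_bbar g hg x₀
    rw [hx₀] at this
    exact this
  have hgr : g (reverse x₀) = revM A := by
    have := g_reverse g hg x₀
    rw [hx₀] at this
    exact this
  have hgi : g (involute x₀) = invM A := by
    have := g_involute g hg x₀
    rw [hx₀] at this
    exact this
  have TN : (∃ l : F, l ≠ 0 ∧
      x₀ * involute (reverse x₀) = algebraMap F (CliffordAlgebra QW) l ∧
      involute (reverse x₀) * x₀ = algebraMap F (CliffordAlgebra QW) l) ↔
      (∃ l : F, l ≠ 0 ∧ A * barM A = algebraMap F _ l ∧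
        barM A * A = algebraMap F _ l) := by
    constructor
    · rintro ⟨l, hl, e1, e2⟩
      refine ⟨l, hl, ?_, ?_⟩
      · rw [← hgb, ← hx₀, ← map_mul, e1, AlgHom.commutes]
      · rw [← hgb, ← hx₀, ← map_mul, e2, AlgHom.commutes]
    · rintro ⟨l, hl, e1, e2⟩
      refine ⟨l, hl, hginj ?_, hginj ?_⟩
      · rw [map_mul, hgb, hx₀, AlgHom.commutes, e1]
      · rw [map_mul, hgb, hx₀, AlgHom.commutes, e2]
  have TW : (∀ w : V × F × F, ∃ w' : V × F × F,
      x₀ * ι QW w * reverse x₀ = ι QW w') ↔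
      (∀ w : V × F × F, ∃ w' : V × F × F, A * mw Q w * revM A = mw Q w') := by
    constructor
    · intro h w
      obtain ⟨w', hw'⟩ := h w
      refine ⟨w', ?_⟩
      rw [← hmw w, ← hgr, ← hx₀, ← map_mul, ← map_mul, hw', hmw w']
    · intro h w
      obtain ⟨w', hw'⟩ := h w
      refine ⟨w', hginj ?_⟩
      rw [map_mul, map_mul, hmw, hgr, hx₀, hw', hmw]
  constructor
  · rw [vahlen_iff]
    constructor
    · rintro ⟨x, hΓ, hgA⟩
      have hux : (↑x : CliffordAlgebra QW) = x₀ := hginj (by rw [hgA, hx₀])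
      have hcond := elem.mp ⟨x, hΓ, hux⟩
      exact ⟨TN.mp hcond.1, TW.mp hcond.2⟩
    · rintro ⟨h1, h2⟩
      obtain ⟨u, hΓ, hux⟩ := elem.mpr ⟨TN.mpr h1, TW.mpr h2⟩
      exact ⟨u, hΓ, by rw [hux, hx₀]⟩
  · rw [vahlen_iff]
    constructor
    · rintro ⟨x, hΓ, hxinv, hgA⟩
      have hux : (↑x : CliffordAlgebra QW) = x₀ := hginj (by rw [hgA, hx₀])
      have hcond := elem.mp ⟨x, hΓ, hux⟩
      rw [hux] at hxinv
      have hpar : invM A = A := by rw [← hgi, hxinv, hx₀]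
      have e00 := Matrix.ext_iff.mpr hpar 0 0
      have e01 := Matrix.ext_iff.mpr hpar 0 1
      have e10 := Matrix.ext_iff.mpr hpar 1 0
      have e11 := Matrix.ext_iff.mpr hpar 1 1
      rw [invM00] at e00
      rw [invM01] at e01
      rw [invM10] at e10
      rw [invM11] at e11
      exact ⟨⟨TN.mp hcond.1, TW.mp hcond.2⟩, e00, e11,
        neg_eq_iff_eq_neg.mp e01, neg_eq_iff_eq_neg.mp e10⟩
    · rintro ⟨⟨h1, h2⟩, p00, p11, p01, p10⟩
      have hix : involute x₀ = x₀ := by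
        apply hginj
        rw [hgi, hx₀]
        refine m2ext ?_ ?_ ?_ ?_
        · rw [invM00, p00]
        · rw [invM01, p01, neg_neg]
        · rw [invM10, p10, neg_neg]
        · rw [invM11, p11]
      obtain ⟨u, hΓ, hux⟩ := elem.mpr ⟨TN.mpr h1, TW.mpr h2⟩
      exact ⟨u, hΓ, by rw [hux]; rw [hix], by rw [hux, hx₀]⟩
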